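/- Let ν ≥ 2 and β ≥ 1 be integers, c ∈ ℝ, j, L ∈ ℕ, and let q : ℕ → ℝ satisfy q(ℓ) = 0 for ℓ > L. Let z : ℝ → ℝ and t₀ ∈ ℝ be such that z has derivative −c·z(t₀)^{ν+1}/(ν−(ν−1)z(t₀)) at t₀, with ν−(ν−1)z(t₀) ≠ 0. Define G(t) = z(t)^{jν+1} · Σ_{ℓ=0}^{L+1} q(ℓ)·(ν−(ν−1)z(t))^{−(β+ℓ+j)}, and define q'(ℓ) = ν·(β+ℓ+j−1)·q(ℓ−1) − (β+ℓ−1−(ν−1)j)·q(ℓ) for ℓ ≥ 1 and q'(0) = −(β−1−(ν−1)j)·q(0). Then G has derivative at t₀ equal to −c · z(t₀)^{(j+1)ν+1} · Σ_{ℓ=0}^{L+1} q'(ℓ)·(ν−(ν−1)z(t₀))^{−(β+ℓ+j+1)}. -/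

import Mathlib

private lemma aux_term_deriv (ν β : ℕ) (c : ℝ) (j ℓ : ℕ) (qℓ : ℝ)
    (z : ℝ → ℝ) (t₀ : ℝ)
    (hden : (ν : ℝ) - ((ν : ℝ) - 1) * z t₀ ≠ 0)
    (hz : HasDerivAt z (-c * z t₀ ^ (ν + 1) / ((ν : ℝ) - ((ν : ℝ) - 1) * z t₀)) t₀) :
    HasDerivAt
      (fun t => qℓ * (z t ^ (j * ν + 1) * ((ν : ℝ) - ((ν : ℝ) - 1) * z t) ^ (-(β + ℓ + j : ℤ))))
      (qℓ * (-c * z t₀ ^ ((j + 1) * ν + 1) *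
        (((j : ℝ) * ν + 1 - ((β : ℝ) + ℓ + j)) * ((ν : ℝ) - ((ν : ℝ) - 1) * z t₀) ^ (-(β + ℓ + j + 1 : ℤ))
          + (ν : ℝ) * ((β : ℝ) + ℓ + j) * ((ν : ℝ) - ((ν : ℝ) - 1) * z t₀) ^ (-(β + ℓ + j + 2 : ℤ)))))
      t₀ := by
  set W0 := (ν : ℝ) - ((ν : ℝ) - 1) * z t₀ with hW0
  have hw : HasDerivAt (fun t => (ν : ℝ) - ((ν : ℝ) - 1) * z t)
      (-(((ν : ℝ) - 1) * (-c * z t₀ ^ (ν + 1) / W0))) t₀ := (hz.const_mul _).const_sub _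
  have hzp : HasDerivAt (fun t => ((ν : ℝ) - ((ν : ℝ) - 1) * z t) ^ (-(β + ℓ + j : ℤ)))
      (((-(β + ℓ + j : ℤ) : ℤ) : ℝ) * W0 ^ ((-(β + ℓ + j : ℤ)) - 1) *
        (-(((ν : ℝ) - 1) * (-c * z t₀ ^ (ν + 1) / W0)))) t₀ :=
    by have := (hasDerivAt_zpow (-(β + ℓ + j : ℤ)) W0 (Or.inl hden)).comp t₀ hw; exact this
  have hp := hz.pow (j * ν + 1)
  have H := (hp.mul hzp).const_mul qℓ
  convert H using 1
  case e'_4 => rfl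
  case e'_5 => rfl
  case e'_8 => rfl
  have hZ : ∀ k : ℕ, W0 ^ (-(k : ℤ)) = (W0 ^ k)⁻¹ := fun k => by
    rw [zpow_neg, zpow_natCast]
  have e1 : (-(β + ℓ + j : ℤ)) = -((β + ℓ + j : ℕ) : ℤ) := by push_cast; ring
  have e2 : (-(β + ℓ + j : ℤ)) - 1 = -((β + ℓ + j + 1 : ℕ) : ℤ) := by push_cast; ring
  have e3 : (-(β + ℓ + j + 1 : ℤ)) = -((β + ℓ + j + 1 : ℕ) : ℤ) := by push_cast; ring
  have e4 : (-(β + ℓ + j + 2 : ℤ)) = -((β + ℓ + j + 2 : ℕ) : ℤ) := by push_cast; ring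
  rw [e2, e1, e3, e4, hZ, hZ, hZ]
  have hWk : ∀ k : ℕ, W0 ^ k ≠ 0 := fun k => pow_ne_zero k hden
  simp only [Pi.pow_apply, Nat.add_sub_cancel, Int.cast_neg, Int.cast_natCast, Int.cast_add, Nat.cast_add, Nat.cast_mul, Nat.cast_one]
  field_simp
  ring_nf
  rw [hW0]
  ring


/-- The coefficient recurrence for derivatives of partial-fraction forms along the
string-equation flow: if `G(t) = z(t)^(jν+1) ∑_{ℓ=0}^{L+1} q(ℓ) (ν-(ν-1)z(t))^{-(β+ℓ+j)}`
and `z' (t₀) = -c z(t₀)^(ν+1)/(ν-(ν-1)z(t₀))`, then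
`G'(t₀) = -c z(t₀)^((j+1)ν+1) ∑_{ℓ=0}^{L+1} q'(ℓ) (ν-(ν-1)z(t₀))^{-(β+ℓ+j+1)}`
where `q'(ℓ) = ν(β+ℓ+j-1) q(ℓ-1) - (β+ℓ-1-(ν-1)j) q(ℓ)`. -/
theorem coefficient_recurrence
    (ν β : ℕ) (hν : 2 ≤ ν) (hβ : 1 ≤ β)
    (c : ℝ) (j L : ℕ) (q q' : ℕ → ℝ)
    (hqL : ∀ ℓ : ℕ, L < ℓ → q ℓ = 0)
    (z : ℝ → ℝ) (t₀ : ℝ)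
    (hden : (ν : ℝ) - ((ν : ℝ) - 1) * z t₀ ≠ 0)
    (hz : HasDerivAt z (-c * z t₀ ^ (ν + 1) / ((ν : ℝ) - ((ν : ℝ) - 1) * z t₀)) t₀)
    (hq'0 : q' 0 = -((β : ℝ) - 1 - ((ν : ℝ) - 1) * (j : ℝ)) * q 0)
    (hq' : ∀ ℓ : ℕ, 1 ≤ ℓ →
      q' ℓ = (ν : ℝ) * ((β : ℝ) + (ℓ : ℝ) + (j : ℝ) - 1) * q (ℓ - 1)
        - ((β : ℝ) + (ℓ : ℝ) - 1 - ((ν : ℝ) - 1) * (j : ℝ)) * q ℓ) :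
    HasDerivAt
      (fun t => z t ^ (j * ν + 1) *
        ∑ ℓ ∈ Finset.range (L + 2),
          q ℓ * ((ν : ℝ) - ((ν : ℝ) - 1) * z t) ^ (-(β + ℓ + j : ℤ)))
      (-c * z t₀ ^ ((j + 1) * ν + 1) *
        ∑ ℓ ∈ Finset.range (L + 2),
          q' ℓ * ((ν : ℝ) - ((ν : ℝ) - 1) * z t₀) ^ (-(β + ℓ + j + 1 : ℤ)))
      t₀ := by
  have key : ∀ ℓ ∈ Finset.range (L + 2), HasDerivAt
      (fun t => q ℓ * (z t ^ (j * ν + 1) * ((ν : ℝ) - ((ν : ℝ) - 1) * z t) ^ (-(β + ℓ + j : ℤ))))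
      (q ℓ * (-c * z t₀ ^ ((j + 1) * ν + 1) *
        (((j : ℝ) * ν + 1 - ((β : ℝ) + ℓ + j)) * ((ν : ℝ) - ((ν : ℝ) - 1) * z t₀) ^ (-(β + ℓ + j + 1 : ℤ))
          + (ν : ℝ) * ((β : ℝ) + ℓ + j) * ((ν : ℝ) - ((ν : ℝ) - 1) * z t₀) ^ (-(β + ℓ + j + 2 : ℤ)))))
      t₀ := fun ℓ _ => aux_term_deriv ν β c j ℓ (q ℓ) z t₀ hden hz
  have hsum := HasDerivAt.sum key
  have hfun : (fun t => z t ^ (j * ν + 1) *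
        ∑ ℓ ∈ Finset.range (L + 2),
          q ℓ * ((ν : ℝ) - ((ν : ℝ) - 1) * z t) ^ (-(β + ℓ + j : ℤ)))
      = (fun t => ∑ ℓ ∈ Finset.range (L + 2),
          q ℓ * (z t ^ (j * ν + 1) * ((ν : ℝ) - ((ν : ℝ) - 1) * z t) ^ (-(β + ℓ + j : ℤ)))) := by
    funext t
    rw [Finset.mul_sum]
    exact Finset.sum_congr rfl fun ℓ _ => by ring
  rw [hfun]
  convert hsum using 1
  case e'_4 => rfl
  case e'_5 => rfl
  case e'_8 => ext t; simp only [Finset.sum_apply]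
  -- the value identity
  set Z := z t₀ with hZdef
  set W := (ν : ℝ) - ((ν : ℝ) - 1) * z t₀ with hWdef
  set M := (j + 1) * ν + 1 with hM
  -- abbreviations for the two pieces of each RHS term
  rw [Finset.mul_sum]
  have hsplit : ∀ ℓ ∈ Finset.range (L + 2),
      q ℓ * (-c * Z ^ M *
        (((j : ℝ) * ν + 1 - ((β : ℝ) + ℓ + j)) * W ^ (-(β + ℓ + j + 1 : ℤ))
          + (ν : ℝ) * ((β : ℝ) + ℓ + j) * W ^ (-(β + ℓ + j + 2 : ℤ))))
      = (-c * Z ^ M * (((j : ℝ) * ν + 1 - ((β : ℝ) + ℓ + j)) * q ℓ * W ^ (-(β + ℓ + j + 1 : ℤ))))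
        + (-c * Z ^ M * ((ν : ℝ) * ((β : ℝ) + ℓ + j) * q ℓ * W ^ (-(β + ℓ + j + 2 : ℤ)))) :=
    fun ℓ _ => by ring
  rw [Finset.sum_congr rfl hsplit, Finset.sum_add_distrib]
  -- reindex the second sum
  have htop : -c * Z ^ M * ((ν : ℝ) * ((β : ℝ) + (L + 1 : ℕ) + j) * q (L + 1)
      * W ^ (-(β + (L + 1 : ℕ) + j + 2 : ℤ))) = 0 := by
    rw [hqL (L + 1) (by omega)]; ring
  rw [Finset.sum_range_succ (fun ℓ => -c * Z ^ M * ((ν : ℝ) * ((β : ℝ) + ℓ + j) * q ℓ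
      * W ^ (-(β + ℓ + j + 2 : ℤ)))) (L + 1), htop, add_zero]
  -- expand LHS using sum_range_succ'
  rw [Finset.sum_range_succ' (fun ℓ => -c * Z ^ M *
      (q' ℓ * W ^ (-(β + ℓ + j + 1 : ℤ)))) (L + 1)]
  rw [Finset.sum_range_succ' (fun ℓ => -c * Z ^ M *
      (((j : ℝ) * ν + 1 - ((β : ℝ) + ℓ + j)) * q ℓ * W ^ (-(β + ℓ + j + 1 : ℤ)))) (L + 1)]
  have h0 : -c * Z ^ M * (q' 0 * W ^ (-(β + (0:ℕ) + j + 1 : ℤ)))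
      = -c * Z ^ M * (((j : ℝ) * ν + 1 - ((β : ℝ) + ((0:ℕ) : ℝ) + j)) * q 0 * W ^ (-(β + (0:ℕ) + j + 1 : ℤ))) := by
    rw [hq'0]; push_cast; ring
  have hterm : ∀ i : ℕ,
      -c * Z ^ M * (q' (i + 1) * W ^ (-(β + (i + 1 : ℕ) + j + 1 : ℤ)))
      = -c * Z ^ M * (((j : ℝ) * ν + 1 - ((β : ℝ) + (i + 1 : ℕ) + j)) * q (i + 1)
            * W ^ (-(β + (i + 1 : ℕ) + j + 1 : ℤ)))
        + -c * Z ^ M * ((ν : ℝ) * ((β : ℝ) + i + j) * q i * W ^ (-(β + i + j + 2 : ℤ))) := by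
    intro i
    have he : (-(β + (i + 1 : ℕ) + j + 1 : ℤ)) = (-(β + i + j + 2 : ℤ)) := by push_cast; ring
    rw [hq' (i + 1) (by omega), Nat.add_sub_cancel, he]
    push_cast
    ring
  rw [Finset.sum_congr rfl (fun i _ => hterm i), Finset.sum_add_distrib, h0]
  ring
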